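/- Let N ≥ 1, λ ≠ 0, and let x, x̃ : {1,…,N} → ℝ. Define p : {1,…,N} → ℝ by the open-end Bäcklund equations p_1 = (1/λ)(e^{x̃_1−x_1}−1) and p_k = (1/λ)(e^{x̃_k−x_k}−1) + λe^{x_k−x̃_{k−1}} for 2 ≤ k ≤ N. Then the (1,1)-entry of the monodromy matrix T = L_N·L_{N−1}·⋯·L_1 equals ∏_{k=1}^{N} e^{x̃_k−x_k}. -/

import Mathlib

/-- Transition matrix of the zero curvature representation of the Bäcklund
transformation for the Toda lattice (open-end case, indices 1,…,N). -/
noncomputable def todaOpenL (lam : ℝ) (x p : ℕ → ℝ) (k : ℕ) :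
    Matrix (Fin 2) (Fin 2) ℝ :=
  !![1 + lam * p k, -lam ^ 2 * Real.exp (x k);
     Real.exp (-(x k)), 0]

/-- Monodromy matrix `T = L_N ⬝ L_{N−1} ⬝ ⋯ ⬝ L_1` (open-end case). -/
noncomputable def todaOpenT (N : ℕ) (lam : ℝ) (x p : ℕ → ℝ) :
    Matrix (Fin 2) (Fin 2) ℝ :=
  ((List.range N).reverse.map (fun i => todaOpenL lam x p (i + 1))).prod

lemma todaOpenT_succ (n : ℕ) (lam : ℝ) (x p : ℕ → ℝ) :
    todaOpenT (n + 1) lam x p = todaOpenL lam x p (n + 1) * todaOpenT n lam x p := by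
  simp [todaOpenT, List.range_succ]

/-- For the open-end Toda lattice, the (1,1) entry of the
monodromy matrix equals `∏_{k=1}^N e^{x̃_k − x_k}`. -/
theorem toda_open_monodromy
    (N : ℕ) (hN : 1 ≤ N) (lam : ℝ) (hlam : lam ≠ 0) (x xt p : ℕ → ℝ)
    (hp1 : p 1 = (1 / lam) * (Real.exp (xt 1 - x 1) - 1))
    (hpk : ∀ k, 2 ≤ k → k ≤ N →
      p k = (1 / lam) * (Real.exp (xt k - x k) - 1) + lam * Real.exp (x k - xt (k - 1))) :
    todaOpenT N lam x p 0 0 = ∏ k ∈ Finset.Icc 1 N, Real.exp (xt k - x k) := by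
  set P : ℕ → ℝ := fun n => ∏ k ∈ Finset.Icc 1 n, Real.exp (xt k - x k) with hP
  suffices h : ∀ n, 1 ≤ n → n ≤ N →
      todaOpenT n lam x p 0 0 = P n ∧
      todaOpenT n lam x p 1 0 = P n * Real.exp (-(xt n)) from (h N hN le_rfl).1
  intro n
  induction n with
  | zero => intro h; omega
  | succ m ih =>
    intro _ hmN
    rcases Nat.eq_zero_or_pos m with hm | hm
    · subst hm
      have hT : todaOpenT 1 lam x p = todaOpenL lam x p 1 := by
        simp [todaOpenT, List.range_succ]
      constructor
      · simp only [hT, todaOpenL, Matrix.cons_val', Matrix.cons_val_zero, Matrix.empty_val',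
          Matrix.cons_val_fin_one, Matrix.of_apply, hp1, hP]
        rw [Finset.Icc_self, Finset.prod_singleton]
        field_simp
        ring
      · simp [hT, todaOpenL, hP]
        rw [← Real.exp_add]
        ring_nf
    · have hmN' : m ≤ N := le_of_lt hmN
      obtain ⟨h00, h10⟩ := ih hm hmN'
      have hpk' := hpk (m + 1) (by omega) hmN
      rw [show m + 1 - 1 = m from rfl] at hpk'
      have hPs : P (m + 1) = P m * Real.exp (xt (m+1) - x (m+1)) := by
        simpa [hP] using Finset.prod_Icc_succ_top (show 1 ≤ m + 1 by omega)
          (fun k => Real.exp (xt k - x k))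
      rw [todaOpenT_succ]
      constructor
      · rw [Matrix.mul_apply, Fin.sum_univ_two, h00, h10, hPs]
        simp only [todaOpenL, Matrix.cons_val', Matrix.cons_val_zero, Matrix.cons_val_one,
          Matrix.head_cons, Matrix.empty_val', Matrix.cons_val_fin_one, Matrix.head_fin_const,
          Matrix.of_apply]
        rw [hpk']
        have e1 : Real.exp (xt (m+1) - x (m+1)) = Real.exp (xt (m+1)) / Real.exp (x (m+1)) := by
          rw [Real.exp_sub]
        have e2 : Real.exp (x (m+1) - xt m) = Real.exp (x (m+1)) / Real.exp (xt m) := by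
          rw [Real.exp_sub]
        have e3 : Real.exp (-(xt m)) = 1 / Real.exp (xt m) := by
          rw [Real.exp_neg]; ring
        rw [e1, e2, e3]
        have h1 : Real.exp (x (m+1)) ≠ 0 := Real.exp_ne_zero _
        have h2 : Real.exp (xt m) ≠ 0 := Real.exp_ne_zero _
        field_simp
        ring
      · rw [Matrix.mul_apply, Fin.sum_univ_two, h00, h10, hPs]
        simp [todaOpenL]
        rw [mul_assoc, ← Real.exp_add,
          show xt (m+1) - x (m+1) + -xt (m+1) = -x (m+1) by ring]
        ring
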